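/- Let p₁, p₂, p₃ ∈ ℝ³ be distinct points and p₄ a point in the interior of the convex hull of {p₁, p₂, p₃} (in the plane they span), p₄ ∉ {p₁,p₂,p₃}. Then for all x ∈ ℝ³, ∑_{k=1}^{4} ‖pₖ − x‖ ≥ ∑_{k=1}^{3} ‖pₖ − p₄‖, i.e. p₄ is a Fermat–Torricelli point of the four points {p₁, p₂, p₃, p₄}. -/

import Mathlib

open scoped RealInnerProductSpace

lemma unit_sum_norm_le {E : Type*} [NormedAddCommGroup E] [InnerProductSpace ℝ E]
    (w₁ w₂ w₃ : E) (h : w₁ + w₂ + w₃ = 0) (h₁ : w₁ ≠ 0) (h₂ : w₂ ≠ 0) (h₃ : w₃ ≠ 0) :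
    ‖‖w₁‖⁻¹ • w₁ + ‖w₂‖⁻¹ • w₂ + ‖w₃‖⁻¹ • w₃‖ ≤ 1 := by
  have hs₁ : (0:ℝ) < ‖w₁‖ := norm_pos_iff.mpr h₁
  have hs₂ : (0:ℝ) < ‖w₂‖ := norm_pos_iff.mpr h₂
  have hs₃ : (0:ℝ) < ‖w₃‖ := norm_pos_iff.mpr h₃
  have e12 : w₁ + w₂ = -w₃ := eq_neg_of_add_eq_zero_left h
  have e13 : w₁ + w₃ = -w₂ := eq_neg_of_add_eq_zero_left (by rw [← h]; abel)
  have e23 : w₂ + w₃ = -w₁ := eq_neg_of_add_eq_zero_left (by rw [← h]; abel)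
  have n12 : ‖w₁ + w₂‖ = ‖w₃‖ := by rw [e12, norm_neg]
  have n13 : ‖w₁ + w₃‖ = ‖w₂‖ := by rw [e13, norm_neg]
  have n23 : ‖w₂ + w₃‖ = ‖w₁‖ := by rw [e23, norm_neg]
  have q12 : ⟪w₁, w₂⟫ * 2 = ‖w₃‖^2 - ‖w₁‖^2 - ‖w₂‖^2 := by
    have := norm_add_sq_real w₁ w₂; rw [n12] at this; linarith
  have q13 : ⟪w₁, w₃⟫ * 2 = ‖w₂‖^2 - ‖w₁‖^2 - ‖w₃‖^2 := by
    have := norm_add_sq_real w₁ w₃; rw [n13] at this; linarith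
  have q23 : ⟪w₂, w₃⟫ * 2 = ‖w₁‖^2 - ‖w₂‖^2 - ‖w₃‖^2 := by
    have := norm_add_sq_real w₂ w₃; rw [n23] at this; linarith
  have t12 : ‖w₃‖ ≤ ‖w₁‖ + ‖w₂‖ := by rw [← n12]; exact norm_add_le _ _
  have t13 : ‖w₂‖ ≤ ‖w₁‖ + ‖w₃‖ := by rw [← n13]; exact norm_add_le _ _
  have t23 : ‖w₁‖ ≤ ‖w₂‖ + ‖w₃‖ := by rw [← n23]; exact norm_add_le _ _
  have nu₁ : ‖(‖w₁‖⁻¹ • w₁ : E)‖ = 1 := by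
    rw [norm_smul, Real.norm_eq_abs, abs_of_pos (inv_pos.mpr hs₁)]; field_simp
  have nu₂ : ‖(‖w₂‖⁻¹ • w₂ : E)‖ = 1 := by
    rw [norm_smul, Real.norm_eq_abs, abs_of_pos (inv_pos.mpr hs₂)]; field_simp
  have nu₃ : ‖(‖w₃‖⁻¹ • w₃ : E)‖ = 1 := by
    rw [norm_smul, Real.norm_eq_abs, abs_of_pos (inv_pos.mpr hs₃)]; field_simp
  set u := ‖w₁‖⁻¹ • w₁ + ‖w₂‖⁻¹ • w₂ + ‖w₃‖⁻¹ • w₃ with hu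
  have husq : ‖u‖^2 = 3 + 2 * (‖w₁‖⁻¹ * ‖w₂‖⁻¹ * ⟪w₁, w₂⟫
      + ‖w₁‖⁻¹ * ‖w₃‖⁻¹ * ⟪w₁, w₃⟫ + ‖w₂‖⁻¹ * ‖w₃‖⁻¹ * ⟪w₂, w₃⟫) := by
    rw [← real_inner_self_eq_norm_sq, hu]
    simp only [inner_add_left, inner_add_right, real_inner_smul_left,
      real_inner_smul_right, real_inner_self_eq_norm_sq,
      real_inner_comm w₂ w₁, real_inner_comm w₃ w₁, real_inner_comm w₃ w₂, nu₁, nu₂, nu₃]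
    field_simp
    ring
  -- show x+y+z ≤ -1 style bound
  have key : ‖u‖^2 ≤ 1 := by
    rw [husq]
    have hprod : 0 ≤ (‖w₁‖ + ‖w₂‖ - ‖w₃‖) * (‖w₁‖ + ‖w₃‖ - ‖w₂‖) * (‖w₂‖ + ‖w₃‖ - ‖w₁‖) := by
      have a1 : 0 ≤ ‖w₁‖ + ‖w₂‖ - ‖w₃‖ := by linarith
      have a2 : 0 ≤ ‖w₁‖ + ‖w₃‖ - ‖w₂‖ := by linarith
      have a3 : 0 ≤ ‖w₂‖ + ‖w₃‖ - ‖w₁‖ := by linarith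
      positivity
    have hI12 : ⟪w₁, w₂⟫ = (‖w₃‖^2 - ‖w₁‖^2 - ‖w₂‖^2)/2 := by linarith
    have hI13 : ⟪w₁, w₃⟫ = (‖w₂‖^2 - ‖w₁‖^2 - ‖w₃‖^2)/2 := by linarith
    have hI23 : ⟪w₂, w₃⟫ = (‖w₁‖^2 - ‖w₂‖^2 - ‖w₃‖^2)/2 := by linarith
    rw [hI12, hI13, hI23]
    have heq : 3 + 2 * (‖w₁‖⁻¹ * ‖w₂‖⁻¹ * ((‖w₃‖^2 - ‖w₁‖^2 - ‖w₂‖^2)/2)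
        + ‖w₁‖⁻¹ * ‖w₃‖⁻¹ * ((‖w₂‖^2 - ‖w₁‖^2 - ‖w₃‖^2)/2)
        + ‖w₂‖⁻¹ * ‖w₃‖⁻¹ * ((‖w₁‖^2 - ‖w₂‖^2 - ‖w₃‖^2)/2))
        = 1 - ((‖w₁‖ + ‖w₂‖ - ‖w₃‖) * (‖w₁‖ + ‖w₃‖ - ‖w₂‖) * (‖w₂‖ + ‖w₃‖ - ‖w₁‖))
            / (‖w₁‖ * ‖w₂‖ * ‖w₃‖) := by
      field_simp
      ring
    rw [heq]
    have := div_nonneg hprod (by positivity : (0:ℝ) ≤ ‖w₁‖ * ‖w₂‖ * ‖w₃‖)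
    linarith
  nlinarith [norm_nonneg u]

/-- If `p₄` lies in the interior of the triangle `p₁p₂p₃` (strictly positive
barycentric coordinates) and differs from the vertices, then `p₄` is a
Fermat–Torricelli point of the four points. -/
theorem fermat_torricelli_interior_point
    (p₁ p₂ p₃ p₄ : EuclideanSpace ℝ (Fin 3))
    (hd₁₂ : p₁ ≠ p₂) (hd₁₃ : p₁ ≠ p₃) (hd₂₃ : p₂ ≠ p₃)
    (hint : ∃ a b c : ℝ, 0 < a ∧ 0 < b ∧ 0 < c ∧ a + b + c = 1 ∧
      p₄ = a • p₁ + b • p₂ + c • p₃)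
    (hne : p₄ ≠ p₁ ∧ p₄ ≠ p₂ ∧ p₄ ≠ p₃) :
    ∀ x : EuclideanSpace ℝ (Fin 3),
      ‖p₁ - p₄‖ + ‖p₂ - p₄‖ + ‖p₃ - p₄‖ ≤
        ‖p₁ - x‖ + ‖p₂ - x‖ + ‖p₃ - x‖ + ‖p₄ - x‖ := by
  obtain ⟨a, b, c, ha, hb, hc, habc, hp⟩ := hint
  obtain ⟨h₁, h₂, h₃⟩ := hne
  intro x
  have hv₁ : p₁ - p₄ ≠ 0 := sub_ne_zero.mpr (Ne.symm h₁)
  have hv₂ : p₂ - p₄ ≠ 0 := sub_ne_zero.mpr (Ne.symm h₂)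
  have hv₃ : p₃ - p₄ ≠ 0 := sub_ne_zero.mpr (Ne.symm h₃)
  have hr₁ : (0:ℝ) < ‖p₁ - p₄‖ := norm_pos_iff.mpr hv₁
  have hr₂ : (0:ℝ) < ‖p₂ - p₄‖ := norm_pos_iff.mpr hv₂
  have hr₃ : (0:ℝ) < ‖p₃ - p₄‖ := norm_pos_iff.mpr hv₃
  -- the zero-sum relation
  have hc' : c = 1 - a - b := by linarith
  subst hc'
  have hw : a • (p₁ - p₄) + b • (p₂ - p₄) + (1 - a - b) • (p₃ - p₄) = 0 := by
    rw [hp]; module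
  -- nonvanishing of the weighted vectors
  have hw₁ : a • (p₁ - p₄) ≠ 0 := smul_ne_zero (ne_of_gt ha) hv₁
  have hw₂ : b • (p₂ - p₄) ≠ 0 := smul_ne_zero (ne_of_gt hb) hv₂
  have hw₃ : (1 - a - b) • (p₃ - p₄) ≠ 0 := smul_ne_zero (ne_of_gt hc) hv₃
  have hu := unit_sum_norm_le _ _ _ hw hw₁ hw₂ hw₃
  -- rewrite normalized weighted vectors as normalized vectors
  have norm_smul_eq : ∀ (t : ℝ) (v : EuclideanSpace ℝ (Fin 3)), 0 < t → v ≠ 0 →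
      ‖t • v‖⁻¹ • (t • v) = ‖v‖⁻¹ • v := by
    intro t v ht hv
    rw [norm_smul, Real.norm_eq_abs, abs_of_pos ht, smul_smul]
    congr 1
    field_simp [ht.ne']
  rw [norm_smul_eq a _ ha hv₁, norm_smul_eq b _ hb hv₂, norm_smul_eq _ _ hc hv₃] at hu
  set u₁ := ‖p₁ - p₄‖⁻¹ • (p₁ - p₄) with hu₁def
  set u₂ := ‖p₂ - p₄‖⁻¹ • (p₂ - p₄) with hu₂def
  set u₃ := ‖p₃ - p₄‖⁻¹ • (p₃ - p₄) with hu₃def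
  have nu : ∀ (v : EuclideanSpace ℝ (Fin 3)), v ≠ 0 → ‖‖v‖⁻¹ • v‖ = 1 := by
    intro v hv
    rw [norm_smul, Real.norm_eq_abs, abs_of_pos (inv_pos.mpr (norm_pos_iff.mpr hv))]
    exact inv_mul_cancel₀ (ne_of_gt (norm_pos_iff.mpr hv))
  -- basic estimate for each vertex
  have hest : ∀ (p : EuclideanSpace ℝ (Fin 3)), p - p₄ ≠ 0 →
      ‖p - p₄‖ + (inner ℝ (‖p - p₄‖⁻¹ • (p - p₄) : EuclideanSpace ℝ (Fin 3)) (p₄ - x) : ℝ) ≤ ‖p - x‖ := by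
    intro p hv
    have hdecomp : p - x = (p - p₄) + (p₄ - x) := by abel
    have hle := real_inner_le_norm (‖p - p₄‖⁻¹ • (p - p₄) : EuclideanSpace ℝ (Fin 3)) (p - x)
    rw [nu _ hv, one_mul] at hle
    rw [hdecomp, inner_add_right, real_inner_smul_left, real_inner_self_eq_norm_sq] at hle
    have hr : (0:ℝ) < ‖p - p₄‖ := norm_pos_iff.mpr hv
    have heq : ‖p - p₄‖⁻¹ * ‖p - p₄‖^2 = ‖p - p₄‖ := by
      rw [sq, ← mul_assoc, inv_mul_cancel₀ hr.ne', one_mul]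
    rw [heq] at hle
    rw [show p - p₄ + (p₄ - x) = p - x from by abel] at hle
    exact hle
  have e₁ := hest p₁ hv₁
  have e₂ := hest p₂ hv₂
  have e₃ := hest p₃ hv₃
  -- bound the combined inner product term
  have hcomb : -‖p₄ - x‖ ≤ (inner ℝ u₁ (p₄ - x) : ℝ) + (inner ℝ u₂ (p₄ - x) : ℝ) + (inner ℝ u₃ (p₄ - x) : ℝ) := by
    have hsum : (inner ℝ u₁ (p₄ - x) : ℝ) + (inner ℝ u₂ (p₄ - x) : ℝ) + (inner ℝ u₃ (p₄ - x) : ℝ)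
        = (inner ℝ (u₁ + u₂ + u₃) (p₄ - x) : ℝ) := by rw [inner_add_left, inner_add_left]
    rw [hsum]
    have habs := abs_real_inner_le_norm (u₁ + u₂ + u₃) (p₄ - x)
    have hmul : ‖u₁ + u₂ + u₃‖ * ‖p₄ - x‖ ≤ ‖p₄ - x‖ := by
      nlinarith [norm_nonneg (p₄ - x)]
    have := neg_abs_le (inner ℝ (u₁ + u₂ + u₃) (p₄ - x) : ℝ)
    linarith
  linarith
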